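/- Let G = ℤ^r ⊕ F where F is a finite group, and let φ : G → G be an endomorphism. Then φ(F) ⊆ F (F being the set of torsion elements of G); let φ^finite : F → F be the restriction of φ and let φ^∞ be the induced endomorphism of G/F ≅ ℤ^r, given by an integer matrix M. If det(I − M) ≠ 0, then R(φ) = R(φ^finite) · R(φ^∞) = R(φ^finite) · |det(I − M)|. -/

import Mathlib

/-- The set of Reidemeister (`φ`-twisted conjugacy) classes of an endomorphism `φ` of a
group `G`: `α'` is `φ`-conjugate to `α` iff `α' = γ * α * (φ γ)⁻¹` for some `γ ∈ G`. -/
def ReidemeisterSet {G : Type*} [Group G] (φ : G →* G) : Type _ :=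
  Quot (fun a b : G => ∃ γ : G, b = γ * a * (φ γ)⁻¹)

/-- The set of Reidemeister classes of the endomorphism `v ↦ M.mulVec v` of `ℤʳ` (written
additively): `w` is conjugate to `v` iff `w = u + v − M.mulVec u` for some `u`. -/
def intMatrixReidemeisterSet {r : ℕ} (M : Matrix (Fin r) (Fin r) ℤ) : Type :=
  Quot (fun v w : Fin r → ℤ => ∃ u : Fin r → ℤ, w = u + v - M.mulVec u)

namespace RNAux

lemma quot_mk_eq_iff {α : Type*} {rel : α → α → Prop} (h : Equivalence rel) {a b : α} :
    Quot.mk rel a = Quot.mk rel b ↔ rel a b := by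
  rw [Quot.eq]
  exact ⟨fun h' => (Equivalence.eqvGen_iff h).mp h', Relation.EqvGen.rel a b⟩

lemma mulVec_eq_zero {r : ℕ} (A : Matrix (Fin r) (Fin r) ℤ) (hA : A.det ≠ 0)
    {u : Fin r → ℤ} (h : A.mulVec u = 0) : u = 0 := by
  have h2 : A.adjugate.mulVec (A.mulVec u) = 0 := by rw [h, Matrix.mulVec_zero]
  rw [Matrix.mulVec_mulVec, Matrix.adjugate_mul, Matrix.smul_mulVec,
    Matrix.one_mulVec] at h2
  ext i
  have := congrFun h2 i
  simp only [Pi.smul_apply, smul_eq_mul, Pi.zero_apply, mul_eq_zero] at this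
  tauto

lemma index_range_toLin' {r : ℕ} (A : Matrix (Fin r) (Fin r) ℤ) (hA : A.det ≠ 0) :
    (LinearMap.range (Matrix.toLin' A)).toAddSubgroup.index = A.det.natAbs := by
  classical
  set f : (Fin r → ℤ) →ₗ[ℤ] (Fin r → ℤ) := Matrix.toLin' A with hf
  have hinj : Function.Injective f := by
    rw [← LinearMap.ker_eq_bot, LinearMap.ker_eq_bot']
    intro u hu
    exact mulVec_eq_zero A hA (by simpa [hf, Matrix.toLin'_apply] using hu)
  set N := LinearMap.range f with hN
  obtain ⟨n, snf⟩ := N.smithNormalForm (Pi.basisFun ℤ (Fin r))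
  have e0 : N ≃ₗ[ℤ] (Fin r → ℤ) := (LinearEquiv.ofInjective f hinj).symm
  have hn : r = n := by
    have hc := card_eq_of_linearEquiv ℤ (snf.bN.equivFun.symm.trans e0)
    simpa using hc.symm
  subst hn
  -- the index is the product of the |a i|
  have hidx : N.toAddSubgroup.index = ∏ i, (snf.a i).natAbs := by
    rw [snf.toAddSubgroup_index_eq_pow_mul_prod]
    simp [Ideal.span_singleton_toAddSubgroup_eq_zmultiples, Int.index_zmultiples]
  -- the determinant of f is ± the product of the a i
  let σ : Fin r ≃ Fin r := Equiv.ofBijective snf.f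
    ((Fintype.bijective_iff_injective_and_card snf.f).mpr ⟨snf.f.injective, rfl⟩)
  let e' : (Fin r → ℤ) ≃ₗ[ℤ] N := snf.bM.equiv snf.bN σ.symm
  let g : (Fin r → ℤ) →ₗ[ℤ] (Fin r → ℤ) := N.subtype ∘ₗ (e' : (Fin r → ℤ) →ₗ[ℤ] N)
  have hg : ∀ j, g (snf.bM j) = snf.a (σ.symm j) • snf.bM j := by
    intro j
    have h1 : e' (snf.bM j) = snf.bN (σ.symm j) := snf.bM.equiv_apply _ _ _
    have h2 : snf.f (σ.symm j) = j := σ.apply_symm_apply j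
    show N.subtype (e' (snf.bM j)) = _
    rw [h1]
    rw [show (N.subtype (snf.bN (σ.symm j)) : Fin r → ℤ) = (snf.bN (σ.symm j) : Fin r → ℤ) from rfl,
      snf.snf, h2]
  have hdetg : LinearMap.det g = ∏ i, snf.a i := by
    rw [← LinearMap.det_toMatrix snf.bM]
    have : LinearMap.toMatrix snf.bM snf.bM g = Matrix.diagonal (fun j => snf.a (σ.symm j)) := by
      ext i j
      rw [LinearMap.toMatrix_apply, hg, map_smul, Module.Basis.repr_self]
      by_cases h : i = j
      · subst h; simp
      · simp [Matrix.diagonal_apply_ne _ h, Finsupp.single_eq_of_ne (Ne.symm h), h]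
    rw [this, Matrix.det_diagonal]
    exact Fintype.prod_equiv σ.symm _ _ (fun _ => rfl)
  have hassoc : Associated (LinearMap.det f) (LinearMap.det g) := by
    refine LinearMap.associated_det_of_eq_comp
      ((LinearEquiv.ofInjective f hinj).trans e'.symm) _ _ ?_
    intro x
    show f x = N.subtype (e' (e'.symm (LinearEquiv.ofInjective f hinj x)))
    rw [e'.apply_symm_apply]
    rfl
  have hdf : LinearMap.det f = A.det := LinearMap.det_toLin' A
  calc N.toAddSubgroup.index = ∏ i, (snf.a i).natAbs := hidx
    _ = (∏ i, snf.a i).natAbs := (map_prod Int.natAbsHom _ Finset.univ).symm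
    _ = (LinearMap.det g).natAbs := by rw [hdetg]
    _ = (LinearMap.det f).natAbs := (Int.natAbs_eq_iff_associated.mpr hassoc).symm
    _ = A.det.natAbs := by rw [hdf]

lemma card_intMatrixRS {r : ℕ} (M : Matrix (Fin r) (Fin r) ℤ) :
    Nat.card (intMatrixReidemeisterSet M) =
      (LinearMap.range (Matrix.toLin' (1 - M))).toAddSubgroup.index := by
  set H := (LinearMap.range (Matrix.toLin' (1 - M))).toAddSubgroup with hH
  have key : ∀ v w : Fin r → ℤ, (∃ u, w = u + v - M.mulVec u) ↔ -v + w ∈ H := by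
    intro v w
    constructor
    · rintro ⟨u, rfl⟩
      refine ⟨u, ?_⟩
      show Matrix.toLin' (1 - M) u = _
      rw [Matrix.toLin'_apply, Matrix.sub_mulVec, Matrix.one_mulVec]
      abel
    · rintro ⟨u, hu⟩
      refine ⟨u, ?_⟩
      rw [Matrix.toLin'_apply, Matrix.sub_mulVec, Matrix.one_mulVec] at hu
      have : w = v + (u - M.mulVec u) := by rw [hu]; abel
      rw [this]; abel
  have e : intMatrixReidemeisterSet M ≃ ((Fin r → ℤ) ⧸ H) :=
  { toFun := Quot.lift (QuotientAddGroup.mk (s := H))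
      (fun v w h => (QuotientAddGroup.eq (s := H)).mpr ((key v w).mp h))
    invFun := Quotient.lift (fun v => Quot.mk _ v)
      (fun v w h => Quot.sound ((key v w).mpr ((QuotientAddGroup.leftRel_apply).mp h)))
    left_inv := by rintro ⟨v⟩; rfl
    right_inv := by rintro ⟨v⟩; rfl }
  rw [Nat.card_congr e]
  rfl

section PartA

variable {r : ℕ} {F : Type*} [Group F]

/-- The "twisting" part of `φ` on the free part. -/
def tau (φ : (Multiplicative (Fin r → ℤ)) × F →* (Multiplicative (Fin r → ℤ)) × F)
    (u : Fin r → ℤ) : F := (φ (Multiplicative.ofAdd u, 1)).2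

variable {φ : (Multiplicative (Fin r → ℤ)) × F →* (Multiplicative (Fin r → ℤ)) × F}
  {ψ : F →* F} {M : Matrix (Fin r) (Fin r) ℤ}

lemma tau_zero : tau φ (0 : Fin r → ℤ) = 1 := by
  have h : ((Multiplicative.ofAdd (0 : Fin r → ℤ)), (1:F)) =
      (1 : (Multiplicative (Fin r → ℤ)) × F) := by
    simp [Prod.ext_iff]
  rw [tau, h, map_one]; rfl

lemma phi_apply (hψ : ∀ f : F, φ (1, f) = (1, ψ f))
    (hM : ∀ v : Fin r → ℤ,
      (φ (Multiplicative.ofAdd v, 1)).1 = Multiplicative.ofAdd (M.mulVec v))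
    (u : Fin r → ℤ) (γ : F) :
    φ (Multiplicative.ofAdd u, γ) = (Multiplicative.ofAdd (M.mulVec u), tau φ u * ψ γ) := by
  have h1 : φ (Multiplicative.ofAdd u, (1:F)) = (Multiplicative.ofAdd (M.mulVec u), tau φ u) :=
    Prod.ext_iff.mpr ⟨hM u, rfl⟩
  have h2 : (Multiplicative.ofAdd u, γ) =
      (Multiplicative.ofAdd u, (1:F)) * ((1 : Multiplicative (Fin r → ℤ)), γ) := by
    simp [Prod.ext_iff]
  rw [h2, map_mul, h1, hψ]
  simp [Prod.ext_iff]

lemma relφ_iff (hψ : ∀ f : F, φ (1, f) = (1, ψ f))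
    (hM : ∀ v : Fin r → ℤ,
      (φ (Multiplicative.ofAdd v, 1)).1 = Multiplicative.ofAdd (M.mulVec v))
    (a b : Multiplicative (Fin r → ℤ)) (f g : F) :
    (∃ γp : (Multiplicative (Fin r → ℤ)) × F, (b, g) = γp * (a, f) * (φ γp)⁻¹) ↔
    ∃ u : Fin r → ℤ, ∃ γ : F,
      Multiplicative.toAdd b = u + Multiplicative.toAdd a - M.mulVec u
        ∧ g = γ * f * (ψ γ)⁻¹ * (tau φ u)⁻¹ := by
  constructor
  · rintro ⟨⟨c, γ⟩, h⟩
    have hc : (c, γ) = ((Multiplicative.ofAdd (Multiplicative.toAdd c)), γ) := by simp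
    rw [hc, phi_apply hψ hM] at h
    rw [Prod.ext_iff] at h
    obtain ⟨h1, h2⟩ := h
    refine ⟨Multiplicative.toAdd c, γ, ?_, ?_⟩
    · have := congrArg Multiplicative.toAdd h1
      simpa [sub_eq_add_neg, add_comm, add_left_comm, add_assoc] using this
    · simpa [mul_assoc, mul_inv_rev] using h2
  · rintro ⟨u, γ, h1, h2⟩
    refine ⟨(Multiplicative.ofAdd u, γ), ?_⟩
    rw [phi_apply hψ hM, Prod.ext_iff]
    constructor
    · apply Multiplicative.toAdd.injective
      simpa [sub_eq_add_neg, add_comm, add_left_comm, add_assoc] using h1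
    · simpa [mul_assoc, mul_inv_rev] using h2

lemma relφ_equiv {G : Type*} [Group G] (φ : G →* G) :
    Equivalence (fun a b : G => ∃ γ : G, b = γ * a * (φ γ)⁻¹) := by
  constructor
  · exact fun a => ⟨1, by simp⟩
  · rintro a b ⟨γ, rfl⟩
    exact ⟨γ⁻¹, by simp [mul_assoc]⟩
  · rintro a b c ⟨γ, rfl⟩ ⟨δ, rfl⟩
    exact ⟨δ * γ, by simp [mul_assoc]⟩

lemma relM_equiv (M : Matrix (Fin r) (Fin r) ℤ) :
    Equivalence (fun v w : Fin r → ℤ => ∃ u : Fin r → ℤ, w = u + v - M.mulVec u) := by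
  constructor
  · exact fun v => ⟨0, by simp [Matrix.mulVec_zero]⟩
  · rintro v w ⟨u, rfl⟩
    refine ⟨-u, ?_⟩
    rw [Matrix.mulVec_neg]
    abel
  · rintro a b c ⟨u, rfl⟩ ⟨u', rfl⟩
    refine ⟨u' + u, ?_⟩
    rw [Matrix.mulVec_add]
    abel

variable (φ ψ M) in
/-- The projection from the Reidemeister set of `φ` to that of `M`. -/
def pmap (hψ : ∀ f : F, φ (1, f) = (1, ψ f))
    (hM : ∀ v : Fin r → ℤ,
      (φ (Multiplicative.ofAdd v, 1)).1 = Multiplicative.ofAdd (M.mulVec v)) :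
    ReidemeisterSet φ → intMatrixReidemeisterSet M :=
  Quot.lift
    (fun x : (Multiplicative (Fin r → ℤ)) × F => Quot.mk _ (Multiplicative.toAdd x.1))
    (by
      rintro ⟨a, f⟩ ⟨b, g⟩ hrel
      obtain ⟨u, γ, h1, h2⟩ := (relφ_iff hψ hM a b f g).mp hrel
      exact Quot.sound ⟨u, h1⟩)

lemma pmap_mk (hψ : ∀ f : F, φ (1, f) = (1, ψ f))
    (hM : ∀ v : Fin r → ℤ,
      (φ (Multiplicative.ofAdd v, 1)).1 = Multiplicative.ofAdd (M.mulVec v))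
    (x : (Multiplicative (Fin r → ℤ)) × F) :
    pmap φ ψ M hψ hM (Quot.mk _ x) = Quot.mk _ (Multiplicative.toAdd x.1) := rfl

variable (φ ψ M) in
/-- The section sending a Reidemeister class of `ψ` into that of `φ` over a fixed vector `v`. -/
def Emap (hψ : ∀ f : F, φ (1, f) = (1, ψ f))
    (hM : ∀ v : Fin r → ℤ,
      (φ (Multiplicative.ofAdd v, 1)).1 = Multiplicative.ofAdd (M.mulVec v))
    (v : Fin r → ℤ) : ReidemeisterSet ψ → ReidemeisterSet φ :=
  Quot.lift
    (fun f : F => Quot.mk _ ((Multiplicative.ofAdd v, f) : (Multiplicative (Fin r → ℤ)) × F))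
    (by
      rintro f g ⟨γ, rfl⟩
      apply Quot.sound
      refine (relφ_iff hψ hM _ _ _ _).mpr ⟨0, γ, by simp [Matrix.mulVec_zero], ?_⟩
      simp [tau_zero])

lemma Emap_mk (hψ : ∀ f : F, φ (1, f) = (1, ψ f))
    (hM : ∀ v : Fin r → ℤ,
      (φ (Multiplicative.ofAdd v, 1)).1 = Multiplicative.ofAdd (M.mulVec v))
    (v : Fin r → ℤ) (f : F) :
    Emap φ ψ M hψ hM v (Quot.mk _ f) =
      Quot.mk _ ((Multiplicative.ofAdd v, f) : (Multiplicative (Fin r → ℤ)) × F) := rfl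

end PartA

end RNAux

/-- Let `G = ℤʳ ⊕ F` with `F` a finite group, `φ : G → G` an endomorphism.
Then `φ(F) ⊆ F`; let `φ^finite = ψ : F → F` be the restriction and let `φ^∞`, given by an
integer matrix `M`, be the induced endomorphism of `G⧸F ≅ ℤʳ`. If `det(I − M) ≠ 0`, then
`R(φ) = R(φ^finite) · R(φ^∞) = R(φ^finite) · |det(I − M)|`. -/
theorem reidemeister_number_direct_sum (r : ℕ) {F : Type*} [Group F] [Finite F]
    (φ : (Multiplicative (Fin r → ℤ)) × F →* (Multiplicative (Fin r → ℤ)) × F)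
    (ψ : F →* F)
    (hψ : ∀ f : F, φ (1, f) = (1, ψ f))
    (M : Matrix (Fin r) (Fin r) ℤ)
    (hM : ∀ v : Fin r → ℤ,
      (φ (Multiplicative.ofAdd v, 1)).1 = Multiplicative.ofAdd (M.mulVec v))
    (hdet : (1 - M).det ≠ 0) :
    Nat.card (ReidemeisterSet φ) =
        Nat.card (ReidemeisterSet ψ) * Nat.card (intMatrixReidemeisterSet M) ∧
      Nat.card (intMatrixReidemeisterSet M) = (1 - M).det.natAbs := by
  have part_b : Nat.card (intMatrixReidemeisterSet M) = (1 - M).det.natAbs := by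
    rw [RNAux.card_intMatrixRS, RNAux.index_range_toLin' _ hdet]
  refine ⟨?_, part_b⟩
  -- Part (a)
  have fib : ∀ c : intMatrixReidemeisterSet M,
      Nonempty ({x : ReidemeisterSet φ // RNAux.pmap φ ψ M hψ hM x = c} ≃ ReidemeisterSet ψ) := by
    intro c
    obtain ⟨v, hv⟩ : ∃ v : Fin r → ℤ, Quot.mk _ v = c := Quot.exists_rep c
    have hE : ∀ y, RNAux.pmap φ ψ M hψ hM (RNAux.Emap φ ψ M hψ hM v y) = c := by
      intro y
      obtain ⟨f, rfl⟩ := Quot.exists_rep y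
      rw [RNAux.Emap_mk, RNAux.pmap_mk]
      exact hv
    refine ⟨(Equiv.ofBijective
      (fun y => (⟨RNAux.Emap φ ψ M hψ hM v y, hE y⟩ :
        {x : ReidemeisterSet φ // RNAux.pmap φ ψ M hψ hM x = c})) ⟨?_, ?_⟩).symm⟩
    · -- injectivity
      intro y y' h
      obtain ⟨f, rfl⟩ := Quot.exists_rep y
      obtain ⟨g, rfl⟩ := Quot.exists_rep y'
      have hEE : RNAux.Emap φ ψ M hψ hM v (Quot.mk _ f) =
          RNAux.Emap φ ψ M hψ hM v (Quot.mk _ g) := congrArg Subtype.val h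
      rw [RNAux.Emap_mk, RNAux.Emap_mk] at hEE
      have hrel := (RNAux.quot_mk_eq_iff (RNAux.relφ_equiv φ)).mp hEE
      obtain ⟨u, γ, h1, h2⟩ := (RNAux.relφ_iff hψ hM _ _ _ _).mp hrel
      have hu : u = 0 := by
        apply RNAux.mulVec_eq_zero (1 - M) hdet
        rw [Matrix.sub_mulVec, Matrix.one_mulVec]
        have h1' : v = u + v - M.mulVec u := by simpa using h1
        calc u - M.mulVec u = (u + v - M.mulVec u) - v := by abel
          _ = v - v := by rw [← h1']
          _ = 0 := sub_self v
      subst hu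
      apply Quot.sound
      exact ⟨γ, by simpa [RNAux.tau_zero] using h2⟩
    · -- surjectivity
      rintro ⟨x, hx⟩
      obtain ⟨⟨a, f⟩, rfl⟩ := Quot.exists_rep x
      rw [RNAux.pmap_mk] at hx
      obtain ⟨u, hu⟩ := (RNAux.quot_mk_eq_iff (RNAux.relM_equiv M)).mp (hx.trans hv.symm)
      refine ⟨Quot.mk _ (f * (RNAux.tau φ u)⁻¹), ?_⟩
      apply Subtype.ext
      show RNAux.Emap φ ψ M hψ hM v (Quot.mk _ (f * (RNAux.tau φ u)⁻¹)) = Quot.mk _ (a, f)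
      rw [RNAux.Emap_mk]
      symm
      apply Quot.sound
      refine (RNAux.relφ_iff hψ hM _ _ _ _).mpr ⟨u, 1, ?_, ?_⟩
      · simpa using hu
      · simp
  have main : Nonempty (ReidemeisterSet φ ≃ (intMatrixReidemeisterSet M × ReidemeisterSet ψ)) :=
    ⟨((Equiv.sigmaFiberEquiv (RNAux.pmap φ ψ M hψ hM)).symm.trans
      (Equiv.sigmaCongrRight (fun c => Classical.choice (fib c)))).trans
      (Equiv.sigmaEquivProd _ _)⟩
  obtain ⟨e⟩ := main
  rw [Nat.card_congr e, Nat.card_prod, mul_comm]
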